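/- Let a and b be two distinct symbols. The Thue–Morse word on {a, b} satisfies condition ♠ with constant c = 2, and it satisfies condition ♣ with constant c = 0. -/

import Mathlib

open scoped BigOperators

/-- A `p`-adic floor function: values in `ℤ[1/p]`, `‖x - s x‖_p < 1`, `s 0 = 0`,
and `s` is constant on open unit balls. -/
structure PadicFloor (p : ℕ) [Fact p.Prime] where
  toFun : ℚ_[p] → ℚ_[p]
  zinv : ∀ x, ∃ (m : ℤ) (k : ℕ), toFun x = (m : ℚ_[p]) / (p : ℚ_[p]) ^ k
  norm_sub_lt : ∀ x, ‖x - toFun x‖ < 1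
  map_zero' : toFun 0 = 0
  eq_of_close : ∀ x y, ‖x - y‖ < 1 → toFun x = toFun y

/-- `l` is a prefix of the infinite word `ω` (indexed from 0). -/
def IsPrefixOf {A : Type*} (l : List A) (ω : ℕ → A) : Prop :=
  ∀ (i : ℕ) (h : i < l.length), l.get ⟨i, h⟩ = ω i

/-- `ω` is ultimately periodic. -/
def UltPeriodic {A : Type*} (ω : ℕ → A) : Prop :=
  ∃ N k : ℕ, 0 < k ∧ ∀ n, N ≤ n → ω (n + k) = ω n

/-- Condition ♠ with constant `c`. -/
def Spade {A : Type*} (ω : ℕ → A) (c : ℝ) : Prop :=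
  ¬ UltPeriodic ω ∧
  ∃ W U V : ℕ → List A,
    (∀ n, U n ≠ []) ∧
    (∀ n, IsPrefixOf (W n ++ (U n ++ (V n ++ U n))) ω) ∧
    (∀ n, ((V n).length : ℝ) ≤ c * (U n).length) ∧
    (∀ n, ((W n).length : ℝ) ≤ c * (U n).length) ∧
    (∀ m : ℕ, ∃ n, m < (U n).length)

/-- Condition ♣ with constant `c`. -/
def Club {A : Type*} (ω : ℕ → A) (c : ℝ) : Prop :=
  ¬ UltPeriodic ω ∧
  ∃ W U V : ℕ → List A,
    (∀ n, U n ≠ []) ∧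
    (∀ n, IsPrefixOf (W n ++ (U n ++ (V n ++ (U n).reverse))) ω) ∧
    (∀ n, ((V n).length : ℝ) ≤ c * (U n).length) ∧
    (∀ n, ((W n).length : ℝ) ≤ c * (U n).length) ∧
    (∀ m : ℕ, ∃ n, m < (U n).length)

/-- The Thue–Morse word on the alphabet `{a, b}`: the `n`-th letter (indexed from 0) is `a`
iff the number of `1`s in the binary expansion of `n` is even. -/
def thueMorseWord {A : Type*} (a b : A) : ℕ → A :=
  fun n => if ((Nat.digits 2 n).count 1) % 2 = 0 then a else b

/-! ### Auxiliary lemmas -/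

/-- The parity of the number of 1's in the binary expansion of `n`. -/
def tmf (n : ℕ) : ℕ := (Nat.digits 2 n).count 1 % 2

lemma tmf_lt_two (n : ℕ) : tmf n < 2 := Nat.mod_lt _ two_pos

lemma tmf_two_mul (n : ℕ) : tmf (2 * n) = tmf n := by
  rcases Nat.eq_zero_or_pos n with h | h
  · simp [h]
  · unfold tmf
    rw [Nat.digits_def' (by norm_num : 1 < 2) (by omega)]
    simp [List.count_cons, Nat.mul_mod_right, Nat.mul_div_cancel_left _ (by norm_num : 0 < 2)]

lemma tmf_two_mul_add_one (n : ℕ) : tmf (2 * n + 1) = (tmf n + 1) % 2 := by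
  unfold tmf
  rw [Nat.digits_def' (by norm_num : 1 < 2) (by omega)]
  have h1 : (2 * n + 1) % 2 = 1 := by omega
  have h2 : (2 * n + 1) / 2 = n := by omega
  rw [h1, h2]
  simp [List.count_cons]

lemma tmf_pow (m : ℕ) : tmf (2 ^ m) = 1 := by
  induction m with
  | zero => simp [tmf]
  | succ m ih => rw [pow_succ, mul_comm, tmf_two_mul]; exact ih

lemma tmf_comp : ∀ k i, i < 2 ^ k → tmf (2 ^ k - 1 - i) = (k + tmf i) % 2 := by
  intro k
  induction k with
  | zero => intro i hi; interval_cases i; simp [tmf]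
  | succ k ih =>
    intro i hi
    have h2 : 2 ^ (k + 1) = 2 * 2 ^ k := by ring
    obtain ⟨q, rfl | rfl⟩ := Nat.even_or_odd' i
    · have hq : q < 2 ^ k := by omega
      have e : 2 ^ (k + 1) - 1 - 2 * q = 2 * (2 ^ k - 1 - q) + 1 := by omega
      rw [e, tmf_two_mul_add_one, ih q hq, tmf_two_mul]
      omega
    · have hq : q < 2 ^ k := by omega
      have e : 2 ^ (k + 1) - 1 - (2 * q + 1) = 2 * (2 ^ k - 1 - q) := by omega
      rw [e, tmf_two_mul, ih q hq, tmf_two_mul_add_one]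
      omega

lemma tmf_add : ∀ k j, j < 2 ^ k → tmf (2 ^ k + j) = (1 + tmf j) % 2 := by
  intro k
  induction k with
  | zero => intro j hj; interval_cases j; simp [tmf]
  | succ k ih =>
    intro j hj
    have h2 : 2 ^ (k + 1) = 2 * 2 ^ k := by ring
    obtain ⟨q, rfl | rfl⟩ := Nat.even_or_odd' j
    · have hq : q < 2 ^ k := by omega
      have e : 2 ^ (k + 1) + 2 * q = 2 * (2 ^ k + q) := by omega
      rw [e, tmf_two_mul, ih q hq, tmf_two_mul]
    · have hq : q < 2 ^ k := by omega
      have e : 2 ^ (k + 1) + (2 * q + 1) = 2 * (2 ^ k + q) + 1 := by omega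
      rw [e, tmf_two_mul_add_one, ih q hq, tmf_two_mul_add_one]
      omega

lemma tm_def {A : Type*} (a b : A) (n : ℕ) :
    thueMorseWord a b n = if tmf n = 0 then a else b := rfl

lemma tm_congr {A : Type*} (a b : A) {i j : ℕ} (h : tmf i = tmf j) :
    thueMorseWord a b i = thueMorseWord a b j := by
  rw [tm_def, tm_def, h]

lemma tm_inj {A : Type*} {a b : A} (hab : a ≠ b) {i j : ℕ}
    (h : thueMorseWord a b i = thueMorseWord a b j) : tmf i = tmf j := by
  rcases (by have := tmf_lt_two i; omega : tmf i = 0 ∨ tmf i = 1) with h1 | h1 <;>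
    rcases (by have := tmf_lt_two j; omega : tmf j = 0 ∨ tmf j = 1) with h2 | h2 <;>
      rw [tm_def, tm_def, h1, h2] at h <;> simp_all

lemma isPrefixOf_of_eq_map_range {A : Type*} {l : List A} {ω : ℕ → A} {L : ℕ}
    (h : l = (List.range L).map ω) : IsPrefixOf l ω := by
  subst h; intro i hi; simp

lemma tm_not_ultPeriodic {A : Type*} (a b : A) (hab : a ≠ b) :
    ¬ UltPeriodic (thueMorseWord a b) := by
  rintro ⟨N, k, hk, hp⟩
  have key : ∀ m, N + k ≤ 2 ^ m → (m + tmf (k - 1)) % 2 = 1 := by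
    intro m hm
    have h1 : thueMorseWord a b (2 ^ m - k + k) = thueMorseWord a b (2 ^ m - k) :=
      hp _ (by omega)
    have h2 : 2 ^ m - k + k = 2 ^ m := by omega
    rw [h2] at h1
    have h5 := tm_inj hab h1
    have h3 : 2 ^ m - k = 2 ^ m - 1 - (k - 1) := by omega
    have h4 := tmf_comp m (k - 1) (by omega)
    rw [tmf_pow, h3, h4] at h5
    omega
  have hA := key (N + k) (Nat.lt_two_pow_self (n := _)).le
  have hB := key (N + k + 1) (le_trans (Nat.lt_two_pow_self (n := N + k)).le
    (Nat.pow_le_pow_right (by norm_num) (by omega)))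
  omega

theorem thueMorse_spade_and_club {A : Type*} (a b : A) (hab : a ≠ b) :
    Spade (thueMorseWord a b) 2 ∧ Club (thueMorseWord a b) 0 := by
  set ω := thueMorseWord a b with hω
  constructor
  · refine ⟨tm_not_ultPeriodic a b hab,
      fun n => (List.range (2 ^ n)).map ω,
      fun n => (List.range (2 ^ n)).map (fun j => ω (2 ^ n + j)),
      fun _ => [], ?_, ?_, ?_, ?_, ?_⟩
    · intro n
      simp [List.map_eq_nil_iff, List.range_eq_nil]
    · intro n
      intro i hlen
      simp only [List.length_append, List.length_map, List.length_range, List.length_nil,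
        Nat.zero_add, List.nil_append] at hlen
      simp only [List.get_eq_getElem, List.nil_append, List.getElem_append,
        List.length_map, List.length_range]
      split_ifs with h1 h2
      · simp
      · simp only [List.getElem_map, List.getElem_range]
        apply tm_congr
        congr 1
        omega
      · simp only [List.getElem_map, List.getElem_range]
        have hj : i - 2 ^ n - 2 ^ n < 2 ^ n := by omega
        have e : i = 2 ^ (n + 1) + (i - 2 ^ n - 2 ^ n) := by
          have : 2 ^ (n + 1) = 2 * 2 ^ n := by ring
          omega
        apply tm_congr
        rw [tmf_add n _ hj]
        conv_rhs => rw [e]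
        rw [tmf_add (n + 1) _ (by
          have : 2 ^ (n + 1) = 2 * 2 ^ n := by ring
          omega)]
    · intro n; simp
    · intro n
      simp only [List.length_map, List.length_range]
      have : (0 : ℝ) ≤ (2 : ℝ) ^ n := by positivity
      push_cast
      linarith
    · intro m
      exact ⟨m, by simpa using Nat.lt_two_pow_self (n := m)⟩
  · refine ⟨tm_not_ultPeriodic a b hab,
      fun _ => [],
      fun n => (List.range (2 ^ (2 * n + 1))).map ω,
      fun _ => [], ?_, ?_, ?_, ?_, ?_⟩
    · intro n
      simp [List.map_eq_nil_iff, List.range_eq_nil]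
    · intro n
      intro i hlen
      simp only [List.length_append, List.length_map, List.length_range, List.length_nil,
        List.length_reverse, Nat.zero_add, List.nil_append] at hlen
      simp only [List.get_eq_getElem, List.nil_append, List.getElem_append,
        List.length_map, List.length_range]
      split_ifs with h1
      · simp
      · rw [List.getElem_reverse]
        simp only [List.getElem_map, List.getElem_range, List.length_map, List.length_range]
        have hj : i - 2 ^ (2 * n + 1) < 2 ^ (2 * n + 1) := by omega
        have e2 := tmf_comp (2 * n + 1) (i - 2 ^ (2 * n + 1)) hj
        have e1 := tmf_add (2 * n + 1) (i - 2 ^ (2 * n + 1)) hj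
        have e0 : 2 ^ (2 * n + 1) + (i - 2 ^ (2 * n + 1)) = i := by omega
        rw [e0] at e1
        apply tm_congr
        rw [e2, e1]
        omega
    · intro n; simp
    · intro n; simp
    · intro m
      refine ⟨m, ?_⟩
      simp only [List.length_map, List.length_range]
      calc m < 2 ^ m := Nat.lt_two_pow_self (n := m)
        _ ≤ 2 ^ (2 * m + 1) := Nat.pow_le_pow_right (by norm_num) (by omega)
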